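/- arXiv:2503.02684 — 4 statements merged into one kernel-verified Lean document; each statement's English description precedes it below -/
import Mathlib

section
/- Let p = (0,0,0,σ₊,σ₋) with σ₊² + σ₋² = 1. Then the total derivative DX(p) of the Wainwright–Hsu vector field at p has the following eigenstructure: DX(p)e_{N₁} = (2-4σ₊)e_{N₁}, DX(p)e_{N₂} = (2+2σ₊+2√3σ₋)e_{N₂}, DX(p)e_{N₃} = (2+2σ₊-2√3σ₋)e_{N₃}, DX(p)(-σ₋ e_{Σ₊} + σ₊ e_{Σ₋}) = 0, and DX(p)(σ₊ e_{Σ₊} + σ₋ e_{Σ₋}) = 3(2-γ)(σ₊ e_{Σ₊} + σ₋ e_{Σ₋}); in particular the eigenvalues of DX(p) are 2-4σ₊, 2+2σ₊+2√3σ₋, 2+2σ₊-2√3σ₋, 0, and 3(2-γ). -/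
set_option maxHeartbeats 1000000
set_option linter.unreachableTactic false
set_option linter.unusedTactic false


/-- The vacuum Wainwright–Hsu vector field on `ℝ⁵` in the variables
`(N₁, N₂, N₃, Σ₊, Σ₋)`, with matter parameter `γ`. -/
noncomputable def wainwrightHsu (γ : ℝ) (x : Fin 5 → ℝ) : Fin 5 → ℝ :=
  let N1 := x 0
  let N2 := x 1
  let N3 := x 2
  let Sp := x 3
  let Sm := x 4
  let K : ℝ := (3 / 4) * (N1 ^ 2 + N2 ^ 2 + N3 ^ 2
      - 2 * (N1 * N2 + N2 * N3 + N3 * N1))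
  let Splus : ℝ := (1 / 2) * ((N2 - N3) ^ 2 - N1 * (2 * N1 - N2 - N3))
  let Sminus : ℝ := (Real.sqrt 3 / 2) * (N3 - N2) * (N1 - N2 - N3)
  let Ω : ℝ := 1 - Sp ^ 2 - Sm ^ 2 - K
  let q : ℝ := 2 * (Sp ^ 2 + Sm ^ 2) + (1 / 2) * (3 * γ - 2) * Ω
  ![(q - 4 * Sp) * N1,
    (q + 2 * Sp + 2 * Real.sqrt 3 * Sm) * N2,
    (q + 2 * Sp - 2 * Real.sqrt 3 * Sm) * N3,
    (q - 2) * Sp - 3 * Splus,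
    (q - 2) * Sm - 3 * Sminus]

/-- Standard basis vector of `ℝ⁵`. -/
noncomputable def e (i : Fin 5) : Fin 5 → ℝ := Pi.single i 1

set_option maxHeartbeats 1000000 in
noncomputable abbrev whpr (j : Fin 5) : (Fin 5 → ℝ) →L[ℝ] ℝ :=
  ContinuousLinearMap.proj j

/-- The Jacobian of the Wainwright–Hsu field at `(0,0,0,σp,σm)`. -/
noncomputable def whJac (γ σp σm : ℝ) : (Fin 5 → ℝ) →L[ℝ] (Fin 5 → ℝ) :=
  ContinuousLinearMap.pi
    ![(2 - 4 * σp) • whpr 0,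
      (2 + 2 * σp + 2 * Real.sqrt 3 * σm) • whpr 1,
      (2 + 2 * σp - 2 * Real.sqrt 3 * σm) • whpr 2,
      (3 * (2 - γ) * σp ^ 2) • whpr 3 + (3 * (2 - γ) * σp * σm) • whpr 4,
      (3 * (2 - γ) * σp * σm) • whpr 3 + (3 * (2 - γ) * σm ^ 2) • whpr 4]

lemma wh_hasFDerivAt (γ σp σm : ℝ) (hc : σp ^ 2 + σm ^ 2 = 1) :
    HasFDerivAt (wainwrightHsu γ) (whJac γ σp σm) ![0, 0, 0, σp, σm] := by
  set p : Fin 5 → ℝ := ![0, 0, 0, σp, σm] with hp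
  have h0 : HasFDerivAt (fun x : Fin 5 → ℝ => x 0) (whpr 0) p := hasFDerivAt_apply 0 p
  have h1 : HasFDerivAt (fun x : Fin 5 → ℝ => x 1) (whpr 1) p := hasFDerivAt_apply 1 p
  have h2 : HasFDerivAt (fun x : Fin 5 → ℝ => x 2) (whpr 2) p := hasFDerivAt_apply 2 p
  have h3 : HasFDerivAt (fun x : Fin 5 → ℝ => x 3) (whpr 3) p := hasFDerivAt_apply 3 p
  have h4 : HasFDerivAt (fun x : Fin 5 → ℝ => x 4) (whpr 4) p := hasFDerivAt_apply 4 p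
  have hp0 : p 0 = 0 := rfl
  have hp1 : p 1 = 0 := rfl
  have hp2 : p 2 = 0 := rfl
  have hp3 : p 3 = σp := rfl
  have hp4 : p 4 = σm := rfl
  have hq := (((((hasDerivAt_pow 2 (p 3)).comp_hasFDerivAt p h3).add ((hasDerivAt_pow 2 (p 4)).comp_hasFDerivAt p h4)).const_mul 2).add
    (((((hasFDerivAt_const (1:ℝ) p).sub ((hasDerivAt_pow 2 (p 3)).comp_hasFDerivAt p h3)).sub ((hasDerivAt_pow 2 (p 4)).comp_hasFDerivAt p h4)).sub
      ((((((hasDerivAt_pow 2 (p 0)).comp_hasFDerivAt p h0).add ((hasDerivAt_pow 2 (p 1)).comp_hasFDerivAt p h1)).add ((hasDerivAt_pow 2 (p 2)).comp_hasFDerivAt p h2)).sub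
        ((((h0.mul h1).add (h1.mul h2)).add (h2.mul h0)).const_mul 2)).const_mul
        (3/4))).const_mul (1/2 * (3*γ-2))))
  rw [hasFDerivAt_pi']
  intro i
  fin_cases i
  · simp only [wainwrightHsu, whJac, ContinuousLinearMap.proj_pi, Matrix.cons_val_zero,
      Matrix.cons_val_one, Matrix.head_cons, Matrix.cons_val_two, Matrix.tail_cons,
      Matrix.cons_val_three, Matrix.cons_val_four, Matrix.head_fin_const]
    refine ((hq.sub (h3.const_mul 4)).mul h0).congr_fderiv ?_
    ext v
    simp [whJac, hp0, hp1, hp2, hp3, hp4]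
    exact Or.inl (by linear_combination (2 - (3*γ-2)/2) * hc)
  · simp only [wainwrightHsu, whJac, ContinuousLinearMap.proj_pi, Matrix.cons_val_zero,
      Matrix.cons_val_one, Matrix.head_cons, Matrix.cons_val_two, Matrix.tail_cons,
      Matrix.cons_val_three, Matrix.cons_val_four, Matrix.head_fin_const]
    refine (((hq.add (h3.const_mul 2)).add (h4.const_mul (2 * Real.sqrt 3))).mul h1).congr_fderiv ?_
    ext v
    simp [whJac, hp0, hp1, hp2, hp3, hp4]
    exact Or.inl (by linear_combination (2 - (3*γ-2)/2) * hc)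
  · simp only [wainwrightHsu, whJac, ContinuousLinearMap.proj_pi, Matrix.cons_val_zero,
      Matrix.cons_val_one, Matrix.head_cons, Matrix.cons_val_two, Matrix.tail_cons,
      Matrix.cons_val_three, Matrix.cons_val_four, Matrix.head_fin_const]
    refine (((hq.add (h3.const_mul 2)).sub (h4.const_mul (2 * Real.sqrt 3))).mul h2).congr_fderiv ?_
    ext v
    simp [whJac, hp0, hp1, hp2, hp3, hp4]
    exact Or.inl (by linear_combination (2 - (3*γ-2)/2) * hc)
  · simp only [wainwrightHsu, whJac, ContinuousLinearMap.proj_pi, Matrix.cons_val_zero,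
      Matrix.cons_val_one, Matrix.head_cons, Matrix.cons_val_two, Matrix.tail_cons,
      Matrix.cons_val_three, Matrix.cons_val_four, Matrix.head_fin_const]
    refine (((hq.sub (hasFDerivAt_const (2:ℝ) p)).mul h3).sub
      (((((hasDerivAt_pow 2 (p 1 - p 2)).comp_hasFDerivAt p (h1.sub h2)).sub
        (h0.mul (((h0.const_mul 2).sub h1).sub h2))).const_mul (1/2)).const_mul 3)).congr_fderiv ?_
    ext v
    simp [whJac, hp0, hp1, hp2, hp3, hp4]
    linear_combination (2 - (3*γ-2)/2) * v 3 * hc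
  · simp only [wainwrightHsu, whJac, ContinuousLinearMap.proj_pi, Matrix.cons_val_zero,
      Matrix.cons_val_one, Matrix.head_cons, Matrix.cons_val_two, Matrix.tail_cons,
      Matrix.cons_val_three, Matrix.cons_val_four, Matrix.head_fin_const]
    refine (((hq.sub (hasFDerivAt_const (2:ℝ) p)).mul h4).sub
      ((((h2.sub h1).const_mul (Real.sqrt 3 / 2)).mul
        (((h0.sub h1).sub h2))).const_mul 3)).congr_fderiv ?_
    ext v
    simp [whJac, hp0, hp1, hp2, hp3, hp4]
    linear_combination (2 - (3*γ-2)/2) * v 4 * hc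

/-- Eigenstructure of the linearization of the Wainwright–Hsu vector field at a
point `p = (0,0,0,σ₊,σ₋)` of the Kasner circle: the standard basis vectors
`e_{N₁}, e_{N₂}, e_{N₃}` are eigenvectors with eigenvalues `2-4σ₊`,
`2+2σ₊+2√3σ₋`, `2+2σ₊-2√3σ₋`; the vector `-σ₋e_{Σ₊}+σ₊e_{Σ₋}` tangential to the
Kasner circle is in the kernel; and `σ₊e_{Σ₊}+σ₋e_{Σ₋}` is an eigenvector with
eigenvalue `3(2-γ)`. In particular `2-4σ₊`, `2+2σ₊+2√3σ₋`, `2+2σ₊-2√3σ₋`, `0`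
and `3(2-γ)` are eigenvalues of `DX(p)`. -/
theorem kasner_linearization_eigenstructure (γ σp σm : ℝ)
    (hc : σp ^ 2 + σm ^ 2 = 1) :
    let p : Fin 5 → ℝ := ![0, 0, 0, σp, σm]
    let DX := fderiv ℝ (wainwrightHsu γ) p
    DX (e 0) = (2 - 4 * σp) • e 0 ∧
    DX (e 1) = (2 + 2 * σp + 2 * Real.sqrt 3 * σm) • e 1 ∧
    DX (e 2) = (2 + 2 * σp - 2 * Real.sqrt 3 * σm) • e 2 ∧
    DX (-σm • e 3 + σp • e 4) = 0 ∧
    DX (σp • e 3 + σm • e 4) = (3 * (2 - γ)) • (σp • e 3 + σm • e 4) ∧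
    Module.End.HasEigenvalue (DX : (Fin 5 → ℝ) →ₗ[ℝ] (Fin 5 → ℝ)) (2 - 4 * σp) ∧
    Module.End.HasEigenvalue (DX : (Fin 5 → ℝ) →ₗ[ℝ] (Fin 5 → ℝ))
      (2 + 2 * σp + 2 * Real.sqrt 3 * σm) ∧
    Module.End.HasEigenvalue (DX : (Fin 5 → ℝ) →ₗ[ℝ] (Fin 5 → ℝ))
      (2 + 2 * σp - 2 * Real.sqrt 3 * σm) ∧
    Module.End.HasEigenvalue (DX : (Fin 5 → ℝ) →ₗ[ℝ] (Fin 5 → ℝ)) 0 ∧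
    Module.End.HasEigenvalue (DX : (Fin 5 → ℝ) →ₗ[ℝ] (Fin 5 → ℝ)) (3 * (2 - γ)) := by
  intro p DX
  have hDX : DX = whJac γ σp σm := (wh_hasFDerivAt γ σp σm hc).fderiv
  have H1 : DX (e 0) = (2 - 4 * σp) • e 0 := by
    rw [hDX]; funext j; fin_cases j <;>
      simp [whJac, e, Pi.single_apply] <;> ring
  have H2 : DX (e 1) = (2 + 2 * σp + 2 * Real.sqrt 3 * σm) • e 1 := by
    rw [hDX]; funext j; fin_cases j <;>
      simp [whJac, e, Pi.single_apply] <;> ring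
  have H3 : DX (e 2) = (2 + 2 * σp - 2 * Real.sqrt 3 * σm) • e 2 := by
    rw [hDX]; funext j; fin_cases j <;>
      simp [whJac, e, Pi.single_apply] <;> ring
  have H4 : DX (-σm • e 3 + σp • e 4) = 0 := by
    rw [hDX]; funext j; fin_cases j <;>
      simp [whJac, e, Pi.single_apply] <;> ring
  have H5 : DX (σp • e 3 + σm • e 4) = (3 * (2 - γ)) • (σp • e 3 + σm • e 4) := by
    rw [hDX]; funext j; fin_cases j <;>
      simp [whJac, e, Pi.single_apply] <;>
      first
      | linear_combination (3 * (2 - γ) * σp) * hc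
      | linear_combination (3 * (2 - γ) * σm) * hc
      | ring
  have hne : ∀ i : Fin 5, e i ≠ 0 := by
    intro i h
    simpa [e] using congrFun h i
  have hvne : (-σm • e 3 + σp • e 4 : Fin 5 → ℝ) ≠ 0 := by
    intro h
    have h3 := congrFun h 3
    have h4 := congrFun h 4
    simp [e, Pi.single_apply] at h3 h4
    rw [h3, h4] at hc
    norm_num at hc
  have hwne : (σp • e 3 + σm • e 4 : Fin 5 → ℝ) ≠ 0 := by
    intro h
    have h3 := congrFun h 3
    have h4 := congrFun h 4
    simp [e, Pi.single_apply] at h3 h4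
    rw [h3, h4] at hc
    norm_num at hc
  refine ⟨H1, H2, H3, H4, H5, ?_, ?_, ?_, ?_, ?_⟩
  · exact Module.End.hasEigenvalue_of_hasEigenvector
      ⟨Module.End.mem_eigenspace_iff.mpr H1, hne 0⟩
  · exact Module.End.hasEigenvalue_of_hasEigenvector
      ⟨Module.End.mem_eigenspace_iff.mpr H2, hne 1⟩
  · exact Module.End.hasEigenvalue_of_hasEigenvector
      ⟨Module.End.mem_eigenspace_iff.mpr H3, hne 2⟩
  · exact Module.End.hasEigenvalue_of_hasEigenvector
      ⟨Module.End.mem_eigenspace_iff.mpr (by show DX _ = _; rw [H4, zero_smul]), hvne⟩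
  · exact Module.End.hasEigenvalue_of_hasEigenvector
      ⟨Module.End.mem_eigenspace_iff.mpr H5, hwne⟩
end

section
/- Let (Σ₊,Σ₋,Σ×,Σ₂,N₋,A): ℝ → ℝ⁶ be a differentiable solution of the Bianchi VI*_{-1/9} system. Then the constraint quantity g(t) = (Σ₊(t) + √3·Σ₋(t))·A(t) - Σ×(t)·N₋(t) satisfies the auxiliary equation g' = 2(q + Σ₊ - 1)·g; in particular the set {g = 0} is invariant. -/
/-- Let `(Σ₊,Σ₋,Σ×,Σ₂,N₋,A) : ℝ → ℝ⁶` be a differentiable solution of the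
Bianchi `VI*₋₁/₉` system (with deceleration scalar `q`).  Then the constraint
quantity `g = (Σ₊ + √3·Σ₋)·A - Σ×·N₋` satisfies the auxiliary equation
`g' = 2(q + Σ₊ - 1)·g`. -/
theorem bianchiB_constraint_evolution (γ : ℝ) (Sp Sm Sx S2 Nm A : ℝ → ℝ)
    (hSp : Differentiable ℝ Sp) (hSm : Differentiable ℝ Sm)
    (hSx : Differentiable ℝ Sx) (hS2 : Differentiable ℝ S2)
    (hNm : Differentiable ℝ Nm) (hA : Differentiable ℝ A)
    (q : ℝ → ℝ)
    (hq : ∀ t, q t = 2 * (Sp t ^ 2 + Sm t ^ 2 + S2 t ^ 2 + Sx t ^ 2)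
      + (1 / 2) * (3 * γ - 2) *
        (1 - (Sp t ^ 2 + Sm t ^ 2 + S2 t ^ 2 + Sx t ^ 2) - Nm t ^ 2 - 4 * A t ^ 2))
    (hSp' : ∀ t, deriv Sp t
      = (q t - 2) * Sp t + 3 * S2 t ^ 2 - 2 * Nm t ^ 2 - 6 * A t ^ 2)
    (hSm' : ∀ t, deriv Sm t
      = (q t - 2) * Sm t - Real.sqrt 3 * S2 t ^ 2 + 2 * Real.sqrt 3 * Sx t ^ 2
        - 2 * Real.sqrt 3 * Nm t ^ 2 + 2 * Real.sqrt 3 * A t ^ 2)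
    (hSx' : ∀ t, deriv Sx t
      = (q t - 2 - 2 * Real.sqrt 3 * Sm t) * Sx t - 8 * Nm t * A t)
    (hS2' : ∀ t, deriv S2 t
      = (q t - 2 - 3 * Sp t + Real.sqrt 3 * Sm t) * S2 t)
    (hNm' : ∀ t, deriv Nm t
      = (q t + 2 * Sp t + 2 * Real.sqrt 3 * Sm t) * Nm t + 6 * Sx t * A t)
    (hA' : ∀ t, deriv A t = (q t + 2 * Sp t) * A t) :
    ∀ t, deriv (fun s => (Sp s + Real.sqrt 3 * Sm s) * A s - Sx s * Nm s) t
      = 2 * (q t + Sp t - 1) *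
        ((Sp t + Real.sqrt 3 * Sm t) * A t - Sx t * Nm t) := by
  intro t
  have h3 : Real.sqrt 3 ^ 2 = 3 := Real.sq_sqrt (by norm_num)
  have H : HasDerivAt (fun s => (Sp s + Real.sqrt 3 * Sm s) * A s - Sx s * Nm s)
      (((deriv Sp t + Real.sqrt 3 * deriv Sm t) * A t
        + (Sp t + Real.sqrt 3 * Sm t) * deriv A t)
       - (deriv Sx t * Nm t + Sx t * deriv Nm t)) t := by
    exact (((hSp t).hasDerivAt.add ((hSm t).hasDerivAt.const_mul (Real.sqrt 3))).mul
      (hA t).hasDerivAt).sub (((hSx t).hasDerivAt.mul (hNm t).hasDerivAt))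
  rw [H.deriv, hSp' t, hSm' t, hSx' t, hNm' t, hA' t]
  linear_combination (A t * (- S2 t ^ 2 + 2 * Sx t ^ 2 - 2 * Nm t ^ 2 + 2 * A t ^ 2)) * h3
end

section
/- Let u = (1+√5)/2 and let M be the 2×2 real matrix M = [[r₅r₄, r₅r₄r₂ + r₅r₁], [r₆r₄ + r₃, r₆r₄r₂ + r₆r₁ + r₃r₂]] with r₁ = (u+2)/2, r₂ = -(u²-1)/(2u), r₃ = 2u(u+1)/(2u+1), r₄ = -(u²-1)/(2u+1), r₅ = (2u+1)/(u(u+2)), r₆ = 2(u+1)/(u+2). Then trace(M) = u and det(M) = -u², and consequently the eigenvalues of M are u² = (3+√5)/2 and -1. -/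
open Matrix in
/-- The combined linear local passage at the 3-cycle in Bianchi `VI*₋₁/₉`:
with `u = (1+√5)/2` and the eigenvalue ratios `r₁,…,r₆`, the matrix
`M = [[r₅r₄, r₅r₄r₂ + r₅r₁], [r₆r₄ + r₃, r₆r₄r₂ + r₆r₁ + r₃r₂]]` has
`trace(M) = u` and `det(M) = -u²`, and consequently its eigenvalues are
`u² = (3+√5)/2` and `-1`. -/
theorem threeCycle_CLLP_matrix :
    let u : ℝ := (1 + Real.sqrt 5) / 2
    let r₁ : ℝ := (u + 2) / 2
    let r₂ : ℝ := -((u ^ 2 - 1) / (2 * u))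
    let r₃ : ℝ := 2 * u * (u + 1) / (2 * u + 1)
    let r₄ : ℝ := -((u ^ 2 - 1) / (2 * u + 1))
    let r₅ : ℝ := (2 * u + 1) / (u * (u + 2))
    let r₆ : ℝ := 2 * (u + 1) / (u + 2)
    let M : Matrix (Fin 2) (Fin 2) ℝ :=
      !![r₅ * r₄, r₅ * r₄ * r₂ + r₅ * r₁;
         r₆ * r₄ + r₃, r₆ * r₄ * r₂ + r₆ * r₁ + r₃ * r₂]
    M.trace = u ∧ M.det = -u ^ 2 ∧ u ^ 2 = (3 + Real.sqrt 5) / 2 ∧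
      spectrum ℝ M = {u ^ 2, -1} := by
  intro u r₁ r₂ r₃ r₄ r₅ r₆ M
  have hs : Real.sqrt 5 ^ 2 = 5 := Real.sq_sqrt (by norm_num)
  have hs2 : (2 : ℝ) ≤ Real.sqrt 5 := by
    nlinarith [Real.sqrt_nonneg 5]
  have hu0 : u ≠ 0 := by simp only [u]; nlinarith
  have hu1 : 2 * u + 1 ≠ 0 := by simp only [u]; nlinarith
  have hu2 : u + 2 ≠ 0 := by simp only [u]; nlinarith
  have huu : u ^ 2 = u + 1 := by simp only [u]; nlinarith
  have htr : M.trace = u := by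
    simp only [M, Matrix.trace_fin_two_of, r₁, r₂, r₃, r₄, r₅, r₆]
    field_simp
    linear_combination ((-16)*u ^ 2 + (-112)*u ^ 3 + (-292)*u ^ 4 + (-344)*u ^ 5 + (-176)*u ^ 6 + (-32)*u ^ 7) * huu + ((45/4 : ℝ) * Real.sqrt 5 ^ 0 + (383/8 : ℝ) * Real.sqrt 5 ^ 1 + (309/4 : ℝ) * Real.sqrt 5 ^ 2 + (1033/16 : ℝ) * Real.sqrt 5 ^ 3 + (61/2 : ℝ) * Real.sqrt 5 ^ 4 + (65/8 : ℝ) * Real.sqrt 5 ^ 5 + (9/8 : ℝ) * Real.sqrt 5 ^ 6 + (1/16 : ℝ) * Real.sqrt 5 ^ 7) * hs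
  have hdet : M.det = -u ^ 2 := by
    simp only [M, Matrix.det_fin_two_of, r₁, r₂, r₃, r₄, r₅, r₆]
    field_simp
    linear_combination ((512)*u ^ 6 + (7424)*u ^ 7 + (47360)*u ^ 8 + (174720)*u ^ 9 + (412320)*u ^ 10 + (650640)*u ^ 11 + (697920)*u ^ 12 + (507840)*u ^ 13 + (245760)*u ^ 14 + (75520)*u ^ 15 + (13312)*u ^ 16 + (1024)*u ^ 17) * huu + ((-12475/32 : ℝ) * Real.sqrt 5 ^ 0 + (-249855/64 : ℝ) * Real.sqrt 5 ^ 1 + (-576799/32 : ℝ) * Real.sqrt 5 ^ 2 + (-407585/8 : ℝ) * Real.sqrt 5 ^ 3 + (-12630747/128 : ℝ) * Real.sqrt 5 ^ 4 + (-8887807/64 : ℝ) * Real.sqrt 5 ^ 5 + (-75227501/512 : ℝ) * Real.sqrt 5 ^ 6 + (-61068227/512 : ℝ) * Real.sqrt 5 ^ 7 + (-38477135/512 : ℝ) * Real.sqrt 5 ^ 8 + (-18909445/512 : ℝ) * Real.sqrt 5 ^ 9 + (-3621593/256 : ℝ) * Real.sqrt 5 ^ 10 + (-1074407/256 : ℝ)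 * Real.sqrt 5 ^ 11 + (-243709/256 : ℝ) * Real.sqrt 5 ^ 12 + (-41365/256 : ℝ) * Real.sqrt 5 ^ 13 + (-10145/512 : ℝ) * Real.sqrt 5 ^ 14 + (-847/512 : ℝ) * Real.sqrt 5 ^ 15 + (-43/512 : ℝ) * Real.sqrt 5 ^ 16 + (-1/512 : ℝ) * Real.sqrt 5 ^ 17) * hs
  refine ⟨htr, hdet, by simp only [u]; nlinarith, ?_⟩
  have key : ∀ x : ℝ, x ∈ spectrum ℝ M ↔ (x - u ^ 2) * (x + 1) = 0 := by
    intro x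
    rw [spectrum.mem_iff, Matrix.isUnit_iff_isUnit_det, isUnit_iff_ne_zero,
      not_not]
    have : (algebraMap ℝ (Matrix (Fin 2) (Fin 2) ℝ) x - M).det
        = (x - M 0 0) * (x - M 1 1) - M 0 1 * M 1 0 := by
      rw [Matrix.det_fin_two]
      simp [Matrix.algebraMap_matrix_apply]
    rw [this]
    have e1 : M 0 0 + M 1 1 = u := by
      rw [← htr]; simp [Matrix.trace_fin_two]
    have e2 : M 0 0 * M 1 1 - M 0 1 * M 1 0 = -u ^ 2 := by
      rw [← hdet]; simp [Matrix.det_fin_two]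
    constructor
    · intro h; linear_combination h + x * e1 - x * huu - e2
    · intro h; linear_combination h - x * e1 + x * huu + e2
  ext x
  rw [key x]
  simp only [Set.mem_insert_iff, Set.mem_singleton_iff, mul_eq_zero,
    sub_eq_zero, add_eq_zero_iff_eq_neg]
end

section
/- Let M = (1/100)·[[26754, 11078],[59516, 24751]] be the matrix of the combined linear local passage at the classic 18-cycle. All entries of M are positive and each row sum of M is strictly greater than 1; consequently, for every x = (x₁,x₂) ∈ ℝ² with x₁ < 0 and x₂ < 0, both components of Mx are negative and satisfy (Mx)ᵢ ≤ max(x₁,x₂) for i = 1,2. In particular, in logarithmic coordinates the combined linear local passage at the classic 18-cycle maps the negative quadrant into itself and moves each point at least as far from the origin, i.e., it is a contraction toward the heteroclinic cycle in the original variables. -/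
open Matrix in
/-- The matrix `M = (1/100)·[[26754, 11078],[59516, 24751]]` of the combined
linear local passage at the classic 18-cycle has positive entries and row sums
strictly greater than `1`; consequently, for every `x = (x₁,x₂)` with
`x₁ < 0` and `x₂ < 0`, both components of `Mx` are negative and satisfy
`(Mx)ᵢ ≤ max(x₁,x₂)`: in logarithmic coordinates the combined linear local
passage maps the negative quadrant into itself and moves each point at least
as far from the origin, i.e. it is a contraction toward the heteroclinic
cycle in the original variables. -/
theorem classic18Cycle_contraction :
    let M : Matrix (Fin 2) (Fin 2) ℝ :=
      (1 / 100 : ℝ) • !![26754, 11078; 59516, 24751]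
    (∀ i j : Fin 2, 0 < M i j) ∧
    (∀ i : Fin 2, 1 < M i 0 + M i 1) ∧
    (∀ x : Fin 2 → ℝ, x 0 < 0 → x 1 < 0 →
      (M.mulVec x 0 < 0 ∧ M.mulVec x 1 < 0) ∧
      (M.mulVec x 0 ≤ max (x 0) (x 1) ∧ M.mulVec x 1 ≤ max (x 0) (x 1))) := by
  intro M
  have hM : ∀ i j, 0 < M i j := by
    intro i j
    fin_cases i <;> fin_cases j <;> simp [M] <;> norm_num
  refine ⟨hM, ?_, ?_⟩
  · intro i
    fin_cases i <;> simp [M] <;> norm_num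
  · intro x h0 h1
    have hm : max (x 0) (x 1) < 0 := max_lt h0 h1
    have e0 : M.mulVec x 0 = (267.54 : ℝ) * x 0 + 110.78 * x 1 := by
      simp [M, Matrix.mulVec, dotProduct, Fin.sum_univ_two]; ring
    have e1 : M.mulVec x 1 = (595.16 : ℝ) * x 0 + 247.51 * x 1 := by
      simp [M, Matrix.mulVec, dotProduct, Fin.sum_univ_two]; ring
    have hx0 : x 0 ≤ max (x 0) (x 1) := le_max_left _ _
    have hx1 : x 1 ≤ max (x 0) (x 1) := le_max_right _ _
    constructor
    · constructor <;> [rw [e0]; rw [e1]] <;> nlinarith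
    · constructor <;> [rw [e0]; rw [e1]] <;> nlinarith
end
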